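/- Let Φ be moderate with constant K. Let (Ω, 𝒜, μ) be a measure space and let f and g be nonnegative measurable functions on Ω. Suppose δ > 1, 0 < ε < 1 and 0 < γ < 1 are real numbers such that μ{g > δλ and f ≤ ελ} ≤ γ·μ{g > λ} for every λ > 0. Let ρ and ν be real numbers satisfying Φ(δλ) ≤ ρ·Φ(λ) and Φ(ε⁻¹λ) ≤ ν·Φ(λ) for every λ > 0. If ρ·γ < 1 and ∫_Ω Φ(min{1, g}) dμ < ∞, then ∫_Ω Φ(g) dμ ≤ (ρν/(1−ργ)) · ∫_Ω Φ(f) dμ. -/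

import Mathlib

open MeasureTheory ENNReal NNReal

/-- `Φ : [0,∞) → [0,∞)` is moderate with constant `K`: continuous, nondecreasing,
`Φ(0) = 0` and `Φ(2λ) ≤ K Φ(λ)` for all `λ ≥ 0`. -/
def Moderate (K : ℝ) (Φ : ℝ → ℝ) : Prop :=
  ContinuousOn Φ (Set.Ici 0) ∧ MonotoneOn Φ (Set.Ici 0) ∧ Φ 0 = 0 ∧
    ∀ x : ℝ, 0 ≤ x → Φ (2 * x) ≤ K * Φ x

/-- Layer-cake with respect to an arbitrary σ-finite measure on ℝ. -/
lemma layercake_aux {Ω : Type*} [MeasurableSpace Ω] (μ : Measure Ω) [SigmaFinite μ]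
    (m : Measure ℝ) [SigmaFinite m] (h : Ω → ℝ) (hm : Measurable h) :
    ∫⁻ ω, m (Set.Ioo 0 (h ω)) ∂μ = ∫⁻ lam in Set.Ioi 0, μ {ω | lam < h ω} ∂m := by
  have hs : MeasurableSet {p : Ω × ℝ | 0 < p.2 ∧ p.2 < h p.1} :=
    (measurableSet_lt measurable_const measurable_snd).inter
      (measurableSet_lt measurable_snd (hm.comp measurable_fst))
  have step1 : ∀ ω, m (Set.Ioo 0 (h ω)) =
      ∫⁻ lam, Set.indicator {p : Ω × ℝ | 0 < p.2 ∧ p.2 < h p.1} (1 : Ω × ℝ → ℝ≥0∞) (ω, lam) ∂m := by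
    intro ω
    have e : (fun lam => Set.indicator {p : Ω × ℝ | 0 < p.2 ∧ p.2 < h p.1} (1 : Ω × ℝ → ℝ≥0∞) (ω, lam))
        = Set.indicator (Set.Ioo 0 (h ω)) (1 : ℝ → ℝ≥0∞) := by
      funext lam
      simp only [Set.indicator_apply, Set.mem_setOf_eq, Set.mem_Ioo, Pi.one_apply]
    rw [e, lintegral_indicator_one measurableSet_Ioo]
  simp_rw [step1]
  rw [lintegral_lintegral_swap]
  · have step2 : ∀ lam : ℝ,
        (∫⁻ ω, Set.indicator {p : Ω × ℝ | 0 < p.2 ∧ p.2 < h p.1} (1 : Ω × ℝ → ℝ≥0∞) (ω, lam) ∂μ)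
          = Set.indicator (Set.Ioi 0) (fun lam => μ {ω | lam < h ω}) lam := by
      intro lam
      by_cases hl : (0:ℝ) < lam
      · have e : (fun ω => Set.indicator {p : Ω × ℝ | 0 < p.2 ∧ p.2 < h p.1} (1 : Ω × ℝ → ℝ≥0∞) (ω, lam))
            = Set.indicator {ω | lam < h ω} (1 : Ω → ℝ≥0∞) := by
          funext ω
          simp only [Set.indicator_apply, Set.mem_setOf_eq, hl, true_and, Pi.one_apply]
        rw [e, lintegral_indicator_one (measurableSet_lt measurable_const hm),
          Set.indicator_of_mem (Set.mem_Ioi.2 hl)]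
      · have e : (fun ω => Set.indicator {p : Ω × ℝ | 0 < p.2 ∧ p.2 < h p.1} (1 : Ω × ℝ → ℝ≥0∞) (ω, lam))
            = fun _ => (0 : ℝ≥0∞) := by
          funext ω
          simp only [Set.indicator_apply, Set.mem_setOf_eq, hl, false_and, if_false]
        rw [e, lintegral_zero, Set.indicator_of_notMem (by simpa using hl)]
    simp_rw [step2]
    rw [lintegral_indicator measurableSet_Ioi]
  · exact (measurable_one.indicator hs).aemeasurable


set_option maxHeartbeats 2000000 in
/-- the good-λ method: let `Φ` be moderate with constant `K`, and
`f, g` nonnegative measurable functions on a measure space `(Ω, 𝒜, μ)`.  If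
`δ > 1`, `0 < ε < 1`, `0 < γ < 1` satisfy
`μ{g > δλ, f ≤ ελ} ≤ γ μ{g > λ}` for every `λ > 0`, `ρ, ν` satisfy
`Φ(δλ) ≤ ρ Φ(λ)` and `Φ(ε⁻¹ λ) ≤ ν Φ(λ)` for every `λ > 0`, `ργ < 1` and
`∫ Φ(min(1,g)) dμ < ∞`, then `∫ Φ(g) dμ ≤ (ρν/(1-ργ)) ∫ Φ(f) dμ`. -/
theorem stmt_11 (K : ℝ) (Φ : ℝ → ℝ) (hΦ : Moderate K Φ)
    (Ω : Type*) (m0 : MeasurableSpace Ω) (μ : Measure Ω)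
    (f g : Ω → ℝ) (hfmeas : Measurable f) (hgmeas : Measurable g)
    (hfnn : ∀ ω, 0 ≤ f ω) (hgnn : ∀ ω, 0 ≤ g ω)
    (δ ε γ : ℝ) (hδ : 1 < δ) (hε0 : 0 < ε) (hε1 : ε < 1) (hγ0 : 0 < γ) (hγ1 : γ < 1)
    (hgood : ∀ lam : ℝ, 0 < lam →
      μ {ω | δ * lam < g ω ∧ f ω ≤ ε * lam} ≤ ENNReal.ofReal γ * μ {ω | lam < g ω})
    (ρ ν : ℝ)
    (hρ : ∀ lam : ℝ, 0 < lam → Φ (δ * lam) ≤ ρ * Φ lam)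
    (hν : ∀ lam : ℝ, 0 < lam → Φ (ε⁻¹ * lam) ≤ ν * Φ lam)
    (hργ : ρ * γ < 1)
    (hfin : (∫⁻ ω, ENNReal.ofReal (Φ (min 1 (g ω))) ∂μ) < ∞) :
    (∫⁻ ω, ENNReal.ofReal (Φ (g ω)) ∂μ) ≤
      ENNReal.ofReal (ρ * ν / (1 - ρ * γ)) * ∫⁻ ω, ENNReal.ofReal (Φ (f ω)) ∂μ := by
  obtain ⟨hcont, hmono, h0, hdub⟩ := hΦ
  have hδ0 : (0:ℝ) < δ := lt_trans one_pos hδ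
  have hΦnn : ∀ x : ℝ, 0 ≤ x → 0 ≤ Φ x := by
    intro x hx
    have := hmono (Set.mem_Ici.2 le_rfl) (Set.mem_Ici.2 hx) hx
    linarith [h0 ▸ this]
  -- trivial case: Φ vanishes on [0, ∞)
  by_cases htriv : ∀ x : ℝ, 0 ≤ x → Φ x = 0
  · have hz : (∫⁻ ω, ENNReal.ofReal (Φ (g ω)) ∂μ) = 0 := by
      have : ∀ ω, ENNReal.ofReal (Φ (g ω)) = 0 := fun ω => by
        rw [htriv _ (hgnn ω)]; simp
      simp [this]
    rw [hz]; exact zero_le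
  push_neg at htriv
  obtain ⟨x₀, hx₀nn, hx₀⟩ := htriv
  have hΦx₀ : 0 < Φ x₀ := lt_of_le_of_ne (hΦnn _ hx₀nn) (Ne.symm hx₀)
  have hx₀pos : 0 < x₀ := by
    rcases lt_or_eq_of_le hx₀nn with h | h
    · exact h
    · exact absurd (h ▸ h0.symm ▸ rfl : Φ x₀ = 0) hx₀
  have hmono' : ∀ a b : ℝ, 0 ≤ a → a ≤ b → Φ a ≤ Φ b := fun a b ha hab =>
    hmono (Set.mem_Ici.2 ha) (Set.mem_Ici.2 (le_trans ha hab)) hab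
  have hρ1 : 1 ≤ ρ := by
    have h1 := hρ x₀ hx₀pos
    have h2 : Φ x₀ ≤ Φ (δ * x₀) :=
      hmono' _ _ hx₀nn (le_mul_of_one_le_left hx₀nn hδ.le)
    nlinarith
  have hεinv : 1 < ε⁻¹ := (one_lt_inv₀ hε0).2 hε1
  have hν1 : 1 ≤ ν := by
    have h1 := hν x₀ hx₀pos
    have h2 : Φ x₀ ≤ Φ (ε⁻¹ * x₀) :=
      hmono' _ _ hx₀nn (le_mul_of_one_le_left hx₀nn hεinv.le)
    nlinarith
  have hγρ0 : 0 < 1 - ρ * γ := by linarith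
  have hconst : 0 < ρ * ν / (1 - ρ * γ) := div_pos (by nlinarith) hγρ0
  -- positivity of Φ on (0, ∞)
  have hpos : ∀ x : ℝ, 0 < x → 0 < Φ x := by
    intro x hx
    by_contra hc
    push_neg at hc
    have hx0 : Φ x = 0 := le_antisymm hc (hΦnn x hx.le)
    have hk : ∀ k : ℕ, Φ (δ ^ k * x) = 0 := by
      intro k
      induction k with
      | zero => simpa using hx0
      | succ k ih =>
        have hpk : (0:ℝ) < δ ^ k * x := mul_pos (pow_pos hδ0 k) hx
        have h1 := hρ (δ ^ k * x) hpk
        rw [ih, mul_zero] at h1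
        have h2 : δ ^ (k + 1) * x = δ * (δ ^ k * x) := by ring
        rw [h2]
        exact le_antisymm h1 (hΦnn _ (by positivity))
    obtain ⟨k, hk'⟩ : ∃ k : ℕ, x₀ ≤ δ ^ k * x := by
      obtain ⟨k, hk0⟩ := pow_unbounded_of_one_lt (x₀ / x) hδ
      exact ⟨k, by rw [div_lt_iff₀ hx] at hk0; nlinarith⟩
    have := hmono' _ _ hx₀nn hk'
    rw [hk k] at this
    linarith
  have hK1 : 1 ≤ K := by
    have h1 := hdub 1 zero_le_one
    have h2 : Φ 1 ≤ Φ (2 * 1) := hmono' _ _ zero_le_one (by norm_num)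
    have h3 := hpos 1 one_pos
    nlinarith
  -- case where the right-hand side is infinite
  by_cases hB : (∫⁻ ω, ENNReal.ofReal (Φ (f ω)) ∂μ) = ∞
  · rw [hB, ENNReal.mul_top (by simpa using hconst)]
    exact le_top
  -- main case
  -- the extension of `Φ` to `ℝ` as a Stieltjes function
  set Φ' : ℝ → ℝ := fun x => Φ (max x 0) with hΦ'def
  have hΦ'mono : Monotone Φ' := fun a b hab =>
    hmono (Set.mem_Ici.2 (le_max_right a 0)) (Set.mem_Ici.2 (le_max_right b 0))
      (max_le_max hab le_rfl)
  have hΦ'cont : Continuous Φ' :=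
    hcont.comp_continuous (continuous_id.max continuous_const)
      fun x => Set.mem_Ici.2 (le_max_right x 0)
  have hΦ'eq : ∀ x : ℝ, 0 ≤ x → Φ' x = Φ x := fun x hx => by
    simp only [hΦ'def]; rw [max_eq_left hx]
  have hΦ'0 : Φ' 0 = 0 := by rw [hΦ'eq 0 le_rfl, h0]
  have hΦ'nn : ∀ x : ℝ, 0 ≤ Φ' x := fun x => by
    rw [hΦ'def]; exact hΦnn _ (le_max_right x 0)
  set S : StieltjesFunction ℝ := ⟨Φ', hΦ'mono, fun x => hΦ'cont.continuousWithinAt⟩ with hSdef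
  have hm_Ioo : ∀ x : ℝ, S.measure (Set.Ioo 0 x) = ENNReal.ofReal (Φ' x) := by
    intro x
    rcases le_or_gt x 0 with hx | hx
    · rw [Set.Ioo_eq_empty (not_lt.2 hx), measure_empty]
      have hx0 : Φ' x = 0 := by simp only [hΦ'def]; rw [max_eq_right hx, h0]
      rw [hx0, ENNReal.ofReal_zero]
    · rw [StieltjesFunction.measure_Ioo]
      have hcoe : ⇑S = Φ' := rfl
      have hleft : Function.leftLim Φ' x = Φ' x :=
        leftLim_eq_of_tendsto
          ((hΦ'cont.tendsto x).mono_left nhdsWithin_le_nhds)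
      rw [hcoe, hleft, hΦ'0, sub_zero]
  have hfin' : (∫⁻ ω, ENNReal.ofReal (Φ' (min 1 (g ω))) ∂μ) < ∞ := by
    have e : (fun ω => ENNReal.ofReal (Φ' (min 1 (g ω))))
        = fun ω => ENNReal.ofReal (Φ (min 1 (g ω))) :=
      funext fun ω => by rw [hΦ'eq _ (le_min zero_le_one (hgnn ω))]
    rw [e]; exact hfin
  set Ω₀ : Set Ω := {ω | 0 < g ω} ∪ {ω | 0 < f ω} with hΩ₀def
  have hΩ₀m : MeasurableSet Ω₀ :=
    (measurableSet_lt measurable_const hgmeas).union (measurableSet_lt measurable_const hfmeas)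
  set μ' := μ.restrict Ω₀ with hμ'def
  -- finiteness of level sets
  have hlev : ∀ (h : Ω → ℝ) (c : ℝ), Measurable h → (∀ ω, 0 ≤ h ω) →
      (∫⁻ ω, ENNReal.ofReal (Φ' (min 1 (h ω))) ∂μ) < ∞ → 0 < c →
      μ {ω | c < h ω} < ∞ := by
    intro h c hhm hhnn hint hc
    set a := ENNReal.ofReal (Φ' (min 1 c)) with hadef
    have ha0 : a ≠ 0 := by
      rw [hadef]
      simp only [ne_eq, ENNReal.ofReal_eq_zero, not_le]
      rw [hΦ'eq _ (le_min zero_le_one hc.le)]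
      exact hpos _ (lt_min one_pos hc)
    have hF : Measurable fun ω => ENNReal.ofReal (Φ' (min 1 (h ω))) :=
      ENNReal.measurable_ofReal.comp
        (hΦ'cont.measurable.comp (measurable_const.min hhm))
    have hsub : {ω | c < h ω} ⊆ {ω | a ≤ ENNReal.ofReal (Φ' (min 1 (h ω)))} := by
      intro ω hω
      exact ENNReal.ofReal_le_ofReal (hΦ'mono (min_le_min le_rfl (le_of_lt hω)))
    have hle : a * μ {ω | c < h ω} ≤ ∫⁻ ω, ENNReal.ofReal (Φ' (min 1 (h ω))) ∂μ :=
      le_trans (mul_le_mul_right (measure_mono hsub) a)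
        (mul_meas_ge_le_lintegral₀ hF.aemeasurable a)
    by_contra hcon
    push_neg at hcon
    rw [top_le_iff.1 hcon, ENNReal.mul_top ha0] at hle
    exact absurd (top_le_iff.1 hle) hint.ne
  have hBfin : (∫⁻ ω, ENNReal.ofReal (Φ' (f ω)) ∂μ) < ∞ := by
    have e : (fun ω => ENNReal.ofReal (Φ' (f ω))) = fun ω => ENNReal.ofReal (Φ (f ω)) :=
      funext fun ω => by rw [hΦ'eq _ (hfnn ω)]
    rw [e]; exact lt_top_iff_ne_top.2 hB
  have hlevf : ∀ c : ℝ, 0 < c → μ {ω | c < f ω} < ∞ := by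
    intro c hc
    refine hlev f c hfmeas hfnn (lt_of_le_of_lt ?_ hBfin) hc
    exact lintegral_mono fun ω =>
      ENNReal.ofReal_le_ofReal (hΦ'mono (min_le_right 1 (f ω)))
  have hlevg : ∀ c : ℝ, 0 < c → μ {ω | c < g ω} < ∞ := fun c hc =>
    hlev g c hgmeas hgnn hfin' hc
  haveI hσ : SigmaFinite μ' := by
    refine ⟨⟨⟨fun n => ({ω | 1/(n+1 : ℝ) < g ω} ∪ {ω | 1/(n+1 : ℝ) < f ω}) ∪ Ω₀ᶜ,
      fun _ => trivial, ?_, ?_⟩⟩⟩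
    · intro n
      have h1 : μ' Ω₀ᶜ = 0 := by
        rw [hμ'def, Measure.restrict_apply hΩ₀m.compl, Set.compl_inter_self, measure_empty]
      have hpos' : (0:ℝ) < 1/(n+1 : ℝ) := by positivity
      calc μ' (({ω | 1/(n+1 : ℝ) < g ω} ∪ {ω | 1/(n+1 : ℝ) < f ω}) ∪ Ω₀ᶜ)
          ≤ μ' ({ω | 1/(n+1 : ℝ) < g ω} ∪ {ω | 1/(n+1 : ℝ) < f ω}) + μ' Ω₀ᶜ :=
            measure_union_le _ _
        _ = μ' ({ω | 1/(n+1 : ℝ) < g ω} ∪ {ω | 1/(n+1 : ℝ) < f ω}) := by rw [h1, add_zero]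
        _ ≤ μ ({ω | 1/(n+1 : ℝ) < g ω} ∪ {ω | 1/(n+1 : ℝ) < f ω}) :=
            Measure.restrict_apply_le _ _
        _ ≤ μ {ω | 1/(n+1 : ℝ) < g ω} + μ {ω | 1/(n+1 : ℝ) < f ω} := measure_union_le _ _
        _ < ∞ := ENNReal.add_lt_top.2 ⟨hlevg _ hpos', hlevf _ hpos'⟩
    · ext ω
      simp only [Set.mem_iUnion, Set.mem_union, Set.mem_compl_iff, Set.mem_setOf_eq,
        Set.mem_univ, iff_true, hΩ₀def]
      by_cases hg : 0 < g ω
      · obtain ⟨n, hn⟩ := exists_nat_one_div_lt hg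
        exact ⟨n, Or.inl (Or.inl hn)⟩
      · by_cases hf : 0 < f ω
        · obtain ⟨n, hn⟩ := exists_nat_one_div_lt hf
          exact ⟨n, Or.inl (Or.inr hn)⟩
        · exact ⟨0, Or.inr (by simp [hg, hf])⟩
  -- restriction identity
  have hrestrict : ∀ F : Ω → ℝ≥0∞, (∀ ω, ω ∉ Ω₀ → F ω = 0) →
      ∫⁻ ω, F ω ∂μ = ∫⁻ ω, F ω ∂μ' := by
    intro F hF
    rw [hμ'def]
    calc ∫⁻ ω, F ω ∂μ = ∫⁻ ω, Ω₀.indicator F ω ∂μ := by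
          refine lintegral_congr fun ω => ?_
          by_cases hω : ω ∈ Ω₀
          · rw [Set.indicator_of_mem hω]
          · rw [Set.indicator_of_notMem hω, hF ω hω]
      _ = ∫⁻ ω in Ω₀, F ω ∂μ := lintegral_indicator hΩ₀m F
  -- the layer-cake identity
  have hLC : ∀ h : Ω → ℝ, Measurable h → (∀ ω, 0 ≤ h ω) →
      ∫⁻ ω, ENNReal.ofReal (Φ' (h ω)) ∂μ' = ∫⁻ lam in Set.Ioi 0, μ' {ω | lam < h ω} ∂S.measure := by
    intro h hhm hhnn
    rw [← layercake_aux μ' S.measure h hhm]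
    exact lintegral_congr fun ω => (hm_Ioo (h ω)).symm
  -- pointwise inequalities
  have hptρ : ∀ x : ℝ, 0 ≤ x → Φ' x ≤ ρ * Φ' (x / δ) := by
    intro x hx
    rcases eq_or_lt_of_le hx with h | h
    · rw [← h]
      rw [zero_div, hΦ'0, mul_zero]
    · have hxd : 0 < x / δ := div_pos h hδ0
      have h1 := hρ (x / δ) hxd
      have e : δ * (x / δ) = x := by field_simp
      rw [e] at h1
      rw [hΦ'eq _ hx, hΦ'eq _ hxd.le]
      exact h1
  have hptν : ∀ x : ℝ, 0 ≤ x → Φ' (ε⁻¹ * x) ≤ ν * Φ' x := by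
    intro x hx
    rcases eq_or_lt_of_le hx with h | h
    · rw [← h, mul_zero, hΦ'0, mul_zero]
    · rw [hΦ'eq _ (by positivity), hΦ'eq _ hx]
      exact hν x h
  -- good-lambda for the truncations
  have hgood' : ∀ (n : ℕ) (lam : ℝ), 0 < lam →
      μ' {ω | δ * lam < min (g ω) (n:ℝ) ∧ f ω ≤ ε * lam} ≤
        ENNReal.ofReal γ * μ' {ω | lam < min (g ω) (n:ℝ)} := by
    intro n lam hlam
    rcases le_or_gt (n:ℝ) (δ * lam) with hn | hn
    · have he : {ω | δ * lam < min (g ω) (n:ℝ) ∧ f ω ≤ ε * lam} = ∅ := by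
        ext ω
        simp only [Set.mem_setOf_eq, Set.mem_empty_iff_false, iff_false, not_and]
        intro h1
        exact absurd (lt_of_lt_of_le h1 (min_le_right _ _)) (not_lt.2 hn)
      rw [he, measure_empty]
      exact zero_le
    · have hlamlt : lam < (n:ℝ) := by nlinarith
      have e1 : {ω | δ * lam < min (g ω) (n:ℝ) ∧ f ω ≤ ε * lam}
          = {ω | δ * lam < g ω ∧ f ω ≤ ε * lam} := by
        ext ω; simp only [Set.mem_setOf_eq, lt_min_iff]
        exact ⟨fun ⟨⟨h1, _⟩, h2⟩ => ⟨h1, h2⟩, fun ⟨h1, h2⟩ => ⟨⟨h1, hn⟩, h2⟩⟩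
      have e2 : {ω | lam < min (g ω) (n:ℝ)} = {ω | lam < g ω} := by
        ext ω; simp only [Set.mem_setOf_eq, lt_min_iff]
        exact ⟨fun ⟨h1, _⟩ => h1, fun h1 => ⟨h1, hlamlt⟩⟩
      have hgsub : {ω | lam < g ω} ⊆ Ω₀ := fun ω hω =>
        Set.mem_union_left _ (lt_trans hlam hω)
      have hμ'g : μ' {ω | lam < g ω} = μ {ω | lam < g ω} := by
        rw [hμ'def, Measure.restrict_apply (measurableSet_lt measurable_const hgmeas),
          Set.inter_eq_self_of_subset_left hgsub]
      calc μ' {ω | δ * lam < min (g ω) (n:ℝ) ∧ f ω ≤ ε * lam}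
          ≤ μ {ω | δ * lam < g ω ∧ f ω ≤ ε * lam} := by
            rw [e1]; exact Measure.restrict_apply_le _ _
        _ ≤ ENNReal.ofReal γ * μ {ω | lam < g ω} := hgood lam hlam
        _ = ENNReal.ofReal γ * μ' {ω | lam < min (g ω) (n:ℝ)} := by rw [e2, hμ'g]
  -- doubling iterated
  have hdubpow : ∀ (k : ℕ) (x : ℝ), 0 ≤ x → Φ (2 ^ k * x) ≤ K ^ k * Φ x := by
    intro k
    induction k with
    | zero => intro x hx; simp
    | succ k ih =>
      intro x hx
      have e : (2:ℝ) ^ (k+1) * x = 2 ^ k * (2 * x) := by ring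
      have hKk : (0:ℝ) ≤ K ^ k := pow_nonneg (by linarith) k
      have h1 := ih (2 * x) (by linarith)
      have h2 := hdub x hx
      calc Φ (2 ^ (k+1) * x) = Φ (2 ^ k * (2 * x)) := by rw [e]
        _ ≤ K ^ k * Φ (2 * x) := h1
        _ ≤ K ^ k * (K * Φ x) := by nlinarith
        _ = K ^ (k+1) * Φ x := by ring
  -- the truncated integrals are finite
  have hAfin : ∀ n : ℕ, (∫⁻ ω, ENNReal.ofReal (Φ' (min (g ω) (n:ℝ))) ∂μ') < ∞ := by
    intro n
    have hpt : ∀ ω, Φ' (min (g ω) (n:ℝ)) ≤ K ^ n * Φ' (min 1 (g ω)) := by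
      intro ω
      have hKn : (1:ℝ) ≤ K ^ n := one_le_pow₀ hK1
      rcases le_or_gt (g ω) 1 with h1 | h1
      · have e1 : min 1 (g ω) = g ω := min_eq_right h1
        have h2 : Φ' (min (g ω) (n:ℝ)) ≤ Φ' (g ω) := hΦ'mono (min_le_left _ _)
        rw [e1]
        nlinarith [hΦ'nn (g ω)]
      · have e1 : min 1 (g ω) = 1 := min_eq_left h1.le
        rw [e1]
        have hle2 : min (g ω) (n:ℝ) ≤ 2 ^ n * 1 := by
          rw [mul_one]
          refine le_trans (min_le_right _ _) ?_
          calc (n:ℝ) ≤ ((2:ℕ) ^ n : ℕ) := by exact_mod_cast (Nat.lt_two_pow_self (n := n)).le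
            _ = (2:ℝ) ^ n := by push_cast; ring
        calc Φ' (min (g ω) (n:ℝ)) ≤ Φ' (2 ^ n * 1) := hΦ'mono hle2
          _ = Φ (2 ^ n * 1) := hΦ'eq _ (by positivity)
          _ ≤ K ^ n * Φ 1 := hdubpow n 1 zero_le_one
          _ = K ^ n * Φ' 1 := by rw [hΦ'eq 1 zero_le_one]
    calc (∫⁻ ω, ENNReal.ofReal (Φ' (min (g ω) (n:ℝ))) ∂μ')
        ≤ ∫⁻ ω, ENNReal.ofReal (K ^ n * Φ' (min 1 (g ω))) ∂μ' :=
          lintegral_mono fun ω => ENNReal.ofReal_le_ofReal (hpt ω)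
      _ = ENNReal.ofReal (K ^ n) * ∫⁻ ω, ENNReal.ofReal (Φ' (min 1 (g ω))) ∂μ' := by
          simp_rw [ENNReal.ofReal_mul (pow_nonneg (by linarith : (0:ℝ) ≤ K) n)]
          exact lintegral_const_mul' _ _ ENNReal.ofReal_ne_top
      _ ≤ ENNReal.ofReal (K ^ n) * ∫⁻ ω, ENNReal.ofReal (Φ' (min 1 (g ω))) ∂μ :=
          mul_le_mul_right (lintegral_mono' Measure.restrict_le_self le_rfl) _
      _ < ∞ := ENNReal.mul_lt_top ENNReal.ofReal_lt_top hfin'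
  -- the main chain of inequalities
  have hchain : ∀ n : ℕ,
      (∫⁻ ω, ENNReal.ofReal (Φ' (min (g ω) (n:ℝ))) ∂μ') ≤
        ENNReal.ofReal ρ * (ENNReal.ofReal γ *
            (∫⁻ ω, ENNReal.ofReal (Φ' (min (g ω) (n:ℝ))) ∂μ')
          + ENNReal.ofReal ν * ∫⁻ ω, ENNReal.ofReal (Φ' (f ω)) ∂μ') := by
    intro n
    have hGm : Measurable fun ω => min (g ω) (n:ℝ) := hgmeas.min measurable_const
    have hGnn : ∀ ω, 0 ≤ min (g ω) (n:ℝ) := fun ω => le_min (hgnn ω) (Nat.cast_nonneg n)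
    have hGdm : Measurable fun ω => min (g ω) (n:ℝ) / δ := hGm.div_const δ
    have hGdnn : ∀ ω, 0 ≤ min (g ω) (n:ℝ) / δ := fun ω => div_nonneg (hGnn ω) hδ0.le
    have hfε : Measurable fun ω => ε⁻¹ * f ω := hfmeas.const_mul ε⁻¹
    have hfεnn : ∀ ω, 0 ≤ ε⁻¹ * f ω := fun ω => mul_nonneg (by positivity) (hfnn ω)
    have hanti : Measurable fun lam : ℝ => μ' {ω | lam < min (g ω) (n:ℝ)} := by
      apply Antitone.measurable
      intro s t hst
      exact measure_mono fun ω hω => lt_of_le_of_lt hst hω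
    calc (∫⁻ ω, ENNReal.ofReal (Φ' (min (g ω) (n:ℝ))) ∂μ')
        ≤ ∫⁻ ω, ENNReal.ofReal ρ * ENNReal.ofReal (Φ' (min (g ω) (n:ℝ) / δ)) ∂μ' := by
          refine lintegral_mono fun ω => ?_
          rw [← ENNReal.ofReal_mul (by linarith : (0:ℝ) ≤ ρ)]
          exact ENNReal.ofReal_le_ofReal (hptρ _ (hGnn ω))
      _ = ENNReal.ofReal ρ * ∫⁻ ω, ENNReal.ofReal (Φ' (min (g ω) (n:ℝ) / δ)) ∂μ' :=
          lintegral_const_mul _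
            (ENNReal.measurable_ofReal.comp (hΦ'cont.measurable.comp hGdm))
      _ = ENNReal.ofReal ρ *
            ∫⁻ lam in Set.Ioi 0, μ' {ω | δ * lam < min (g ω) (n:ℝ)} ∂S.measure := by
          rw [hLC _ hGdm hGdnn]
          congr 1
          refine lintegral_congr fun lam => ?_
          congr 1
          ext ω
          simp only [Set.mem_setOf_eq]
          rw [lt_div_iff₀ hδ0, mul_comm]
      _ ≤ ENNReal.ofReal ρ * ∫⁻ lam in Set.Ioi 0,
            (ENNReal.ofReal γ * μ' {ω | lam < min (g ω) (n:ℝ)}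
              + μ' {ω | ε * lam < f ω}) ∂S.measure := by
          refine mul_le_mul_right (setLIntegral_mono' measurableSet_Ioi fun lam hlam => ?_) _
          have hsub : {ω | δ * lam < min (g ω) (n:ℝ)} ⊆
              {ω | δ * lam < min (g ω) (n:ℝ) ∧ f ω ≤ ε * lam} ∪ {ω | ε * lam < f ω} := by
            intro ω hω
            rcases le_or_gt (f ω) (ε * lam) with h1 | h1
            · exact Or.inl ⟨hω, h1⟩
            · exact Or.inr h1
          calc μ' {ω | δ * lam < min (g ω) (n:ℝ)}
              ≤ μ' {ω | δ * lam < min (g ω) (n:ℝ) ∧ f ω ≤ ε * lam}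
                  + μ' {ω | ε * lam < f ω} :=
                le_trans (measure_mono hsub) (measure_union_le _ _)
            _ ≤ ENNReal.ofReal γ * μ' {ω | lam < min (g ω) (n:ℝ)}
                  + μ' {ω | ε * lam < f ω} :=
                add_le_add_left (hgood' n lam (Set.mem_Ioi.1 hlam)) _
      _ = ENNReal.ofReal ρ * (ENNReal.ofReal γ *
            (∫⁻ lam in Set.Ioi 0, μ' {ω | lam < min (g ω) (n:ℝ)} ∂S.measure)
          + ∫⁻ lam in Set.Ioi 0, μ' {ω | ε * lam < f ω} ∂S.measure) := by
          rw [lintegral_add_left (hanti.const_mul _), lintegral_const_mul _ hanti]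
      _ = ENNReal.ofReal ρ * (ENNReal.ofReal γ *
            (∫⁻ ω, ENNReal.ofReal (Φ' (min (g ω) (n:ℝ))) ∂μ')
          + ∫⁻ ω, ENNReal.ofReal (Φ' (ε⁻¹ * f ω)) ∂μ') := by
          have hset : (fun lam : ℝ => μ' {ω | ε * lam < f ω})
              = fun lam : ℝ => μ' {ω | lam < ε⁻¹ * f ω} := by
            funext lam
            congr 1
            ext ω
            simp only [Set.mem_setOf_eq, inv_mul_eq_div, lt_div_iff₀ hε0, mul_comm lam ε]
          rw [hLC _ hGm hGnn, hLC _ hfε hfεnn, hset]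
      _ ≤ ENNReal.ofReal ρ * (ENNReal.ofReal γ *
            (∫⁻ ω, ENNReal.ofReal (Φ' (min (g ω) (n:ℝ))) ∂μ')
          + ENNReal.ofReal ν * ∫⁻ ω, ENNReal.ofReal (Φ' (f ω)) ∂μ') := by
          refine mul_le_mul_right (add_le_add_right ?_ _) _
          calc (∫⁻ ω, ENNReal.ofReal (Φ' (ε⁻¹ * f ω)) ∂μ')
              ≤ ∫⁻ ω, ENNReal.ofReal ν * ENNReal.ofReal (Φ' (f ω)) ∂μ' := by
                refine lintegral_mono fun ω => ?_
                rw [← ENNReal.ofReal_mul (by linarith : (0:ℝ) ≤ ν)]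
                exact ENNReal.ofReal_le_ofReal (hptν _ (hfnn ω))
            _ = ENNReal.ofReal ν * ∫⁻ ω, ENNReal.ofReal (Φ' (f ω)) ∂μ' :=
                lintegral_const_mul _
                  (ENNReal.measurable_ofReal.comp (hΦ'cont.measurable.comp hfmeas))
  -- numeric conclusion for each n
  have hB'le : (∫⁻ ω, ENNReal.ofReal (Φ' (f ω)) ∂μ') ≤ ∫⁻ ω, ENNReal.ofReal (Φ (f ω)) ∂μ := by
    have e : (fun ω => ENNReal.ofReal (Φ' (f ω))) = fun ω => ENNReal.ofReal (Φ (f ω)) :=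
      funext fun ω => by rw [hΦ'eq _ (hfnn ω)]
    rw [e]
    exact lintegral_mono' Measure.restrict_le_self le_rfl
  have hB'fin : (∫⁻ ω, ENNReal.ofReal (Φ' (f ω)) ∂μ') < ∞ :=
    lt_of_le_of_lt hB'le (lt_top_iff_ne_top.2 hB)
  have hpern : ∀ n : ℕ, (∫⁻ ω, ENNReal.ofReal (Φ' (min (g ω) (n:ℝ))) ∂μ') ≤
      ENNReal.ofReal (ρ * ν / (1 - ρ * γ)) * ∫⁻ ω, ENNReal.ofReal (Φ (f ω)) ∂μ := by
    intro n
    set A := ∫⁻ ω, ENNReal.ofReal (Φ' (min (g ω) (n:ℝ))) ∂μ' with hA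
    set B' := ∫⁻ ω, ENNReal.ofReal (Φ' (f ω)) ∂μ' with hB'
    have hkey := hchain n
    rw [← hA] at hkey
    have hAfin' := hAfin n
    rw [← hA] at hAfin'
    set a := A.toReal with ha
    set b := B'.toReal with hb
    have hA_eq : A = ENNReal.ofReal a := (ENNReal.ofReal_toReal hAfin'.ne).symm
    have hB_eq : B' = ENNReal.ofReal b := (ENNReal.ofReal_toReal hB'fin.ne).symm
    have ha0 : 0 ≤ a := ENNReal.toReal_nonneg
    have hb0 : 0 ≤ b := ENNReal.toReal_nonneg
    have hreal : a ≤ ρ * (γ * a + ν * b) := by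
      rw [hA_eq, hB_eq, ← ENNReal.ofReal_mul hγ0.le, ← ENNReal.ofReal_mul (by linarith : (0:ℝ) ≤ ν),
        ← ENNReal.ofReal_add (by positivity) (by positivity),
        ← ENNReal.ofReal_mul (by linarith : (0:ℝ) ≤ ρ)] at hkey
      exact (ENNReal.ofReal_le_ofReal_iff (by positivity)).1 hkey
    have hfinal : a ≤ (ρ * ν / (1 - ρ * γ)) * b := by
      rw [div_mul_eq_mul_div, le_div_iff₀ hγρ0]
      nlinarith
    calc A = ENNReal.ofReal a := hA_eq
      _ ≤ ENNReal.ofReal ((ρ * ν / (1 - ρ * γ)) * b) := ENNReal.ofReal_le_ofReal hfinal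
      _ = ENNReal.ofReal (ρ * ν / (1 - ρ * γ)) * ENNReal.ofReal b :=
          ENNReal.ofReal_mul hconst.le
      _ = ENNReal.ofReal (ρ * ν / (1 - ρ * γ)) * B' := by rw [← hB_eq]
      _ ≤ ENNReal.ofReal (ρ * ν / (1 - ρ * γ)) * ∫⁻ ω, ENNReal.ofReal (Φ (f ω)) ∂μ :=
          mul_le_mul_right hB'le _
  -- monotone convergence
  have hmain : (∫⁻ ω, ENNReal.ofReal (Φ (g ω)) ∂μ)
      = ⨆ n : ℕ, ∫⁻ ω, ENNReal.ofReal (Φ' (min (g ω) (n:ℝ))) ∂μ' := by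
    have e1 : (∫⁻ ω, ENNReal.ofReal (Φ (g ω)) ∂μ) = ∫⁻ ω, ENNReal.ofReal (Φ' (g ω)) ∂μ :=
      lintegral_congr fun ω => by rw [hΦ'eq _ (hgnn ω)]
    have e2 : (∫⁻ ω, ENNReal.ofReal (Φ' (g ω)) ∂μ) = ∫⁻ ω, ENNReal.ofReal (Φ' (g ω)) ∂μ' := by
      refine hrestrict _ fun ω hω => ?_
      have hg0 : g ω = 0 := by
        by_contra hne
        exact hω (Set.mem_union_left _
          (show ω ∈ {ω | 0 < g ω} from lt_of_le_of_ne (hgnn ω) (Ne.symm hne)))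
      rw [hg0, hΦ'0, ENNReal.ofReal_zero]
    rw [e1, e2, ← lintegral_iSup]
    · refine lintegral_congr fun ω => ?_
      obtain ⟨N, hN⟩ := exists_nat_ge (g ω)
      refine le_antisymm ?_ (iSup_le fun n =>
        ENNReal.ofReal_le_ofReal (hΦ'mono (min_le_left _ _)))
      refine le_iSup_of_le N ?_
      rw [min_eq_left hN]
    · exact fun n => ENNReal.measurable_ofReal.comp
        (hΦ'cont.measurable.comp (hgmeas.min measurable_const))
    · intro i j hij ω
      exact ENNReal.ofReal_le_ofReal
        (hΦ'mono (min_le_min le_rfl (Nat.cast_le.2 hij)))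
  rw [hmain]
  exact iSup_le hpern
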